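/- Let L be a finite poset and Δ the abstract simplex whose vertices are the maximal chains of L; for x ∈ L let Δ_x be the face of Δ spanned by maximal chains containing x. Then for any subset S ⊆ L, the intersection ⋂_{x ∈ S} Δ_x is nonempty if and only if S is a chain in L. -/

import Mathlib

open Set

/-- let `L` be a finite poset, and for `x ∈ L` let `Δ_x` be the face of the
simplex on the maximal chains (flags) of `L` spanned by the maximal chains containing `x`,
identified with its vertex set `{f : Flag L | x ∈ f}`.  For any `S ⊆ L`, the faces
`Δ_x`, `x ∈ S`, have a common vertex (equivalently, a common point) iff `S` is a chain. -/
theorem inter_flagFaces_nonempty_iff_isChain {L : Type*} [PartialOrder L] [Fintype L]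
    (S : Set L) :
    (⋂ x ∈ S, {f : Flag L | x ∈ f}).Nonempty ↔ IsChain (· ≤ ·) S := by
  constructor
  · rintro ⟨f, hf⟩
    simp only [mem_iInter, mem_setOf_eq] at hf
    exact f.maxChain.isChain.mono fun x hx => hf x hx
  · intro hS
    obtain ⟨M, hM, hSM⟩ := hS.exists_maxChain
    exact ⟨Flag.ofIsMaxChain M hM, by simpa [mem_iInter] using fun x hx => (show x ∈ Flag.ofIsMaxChain M hM from hSM hx)⟩
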